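/- Let d ≥ 1 and let u : ℝ^d × ℝ → ℝ^d be twice continuously differentiable with u and all its first and second partial derivatives (in space and time) bounded on ℝ^d × ℝ by a constant M. Define, for a time increment Δt > 0 and time level t, the backward-Euler foot-of-characteristic map X₁(x) = x − Δt · u(x, t − Δt). Then there exists a constant C, depending only on d and M, such that for all x ∈ ℝ^d, all t ∈ ℝ and all Δt ∈ (0, 1]: ‖ (u(x,t) − u(X₁(x), t − Δt)) / Δt − [ (∂u/∂t)(x,t) + (Du_x(x,t))(u(x,t)) ] ‖ ≤ C Δt, i.e. the first-order characteristic finite difference approximates the material derivative (∂u/∂t + (u·∇)u)(x,t) with error O(Δt). -/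

import Mathlib

set_option maxHeartbeats 1000000 in
/-- **First-order consistency of the backward-Euler characteristic finite difference.**
For every dimension `d ≥ 1` and bound `M`, there is a constant `C` (depending only on `d`
and `M`) such that: for every `C²` field `u : ℝ^d × ℝ → ℝ^d` whose value and first and
second derivatives are bounded by `M` on `ℝ^d × ℝ`, every `x`, `t`, and every time increment
`Δt ∈ (0, 1]`, the backward-Euler characteristic difference quotient
`(u(x,t) − u(x − Δt·u(x, t−Δt), t−Δt)) / Δt` approximates the material derivative
`(∂u/∂t)(x,t) + (D_x u (x,t)) (u(x,t))` with error at most `C·Δt`. -/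
theorem backward_euler_material_derivative_consistency
    (d : ℕ) (hd : 1 ≤ d) (M : ℝ) :
    ∃ C : ℝ, ∀ (u : EuclideanSpace ℝ (Fin d) × ℝ → EuclideanSpace ℝ (Fin d)),
      ContDiff ℝ 2 u →
      (∀ i : ℕ, i ≤ 2 → ∀ p : EuclideanSpace ℝ (Fin d) × ℝ,
        ‖iteratedFDeriv ℝ i u p‖ ≤ M) →
      ∀ (x : EuclideanSpace ℝ (Fin d)) (t Δt : ℝ), 0 < Δt → Δt ≤ 1 →
        ‖Δt⁻¹ • (u (x, t) - u (x - Δt • u (x, t - Δt), t - Δt))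
            - (deriv (fun s : ℝ => u (x, s)) t
                + (fderiv ℝ (fun y : EuclideanSpace ℝ (Fin d) => u (y, t)) x) (u (x, t)))‖
          ≤ C * Δt := by
  set E := EuclideanSpace ℝ (Fin d)
  refine ⟨M * (M + 1) ^ 2 + M * M, ?_⟩
  intro u hu hb x t Δt hΔt hΔt1
  have hM0 : 0 ≤ M := le_trans (norm_nonneg _) (hb 0 (by norm_num) (x, t))
  have hu1 : Differentiable ℝ u := hu.differentiable (by norm_num)
  have hu2 : Differentiable ℝ (fderiv ℝ u) :=
    (hu.fderiv_right (m := 1) (by norm_num)).differentiable (by norm_num)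
  -- bounds on derivatives
  have hfd_le : ∀ p, ‖fderiv ℝ u p‖ ≤ M := by
    intro p
    have e1 : ‖fderiv ℝ u p‖ = ‖iteratedFDeriv ℝ 1 u p‖ := by
      rw [← norm_iteratedFDeriv_fderiv (n := 0), norm_iteratedFDeriv_zero]
    rw [e1]; exact hb 1 (by norm_num) p
  have hfd2_le : ∀ p, ‖fderiv ℝ (fderiv ℝ u) p‖ ≤ M := by
    intro p
    have e1 : ‖fderiv ℝ (fderiv ℝ u) p‖ = ‖iteratedFDeriv ℝ 2 u p‖ := by
      rw [← norm_iteratedFDeriv_fderiv (n := 1),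
        ← norm_iteratedFDeriv_fderiv (n := 0), norm_iteratedFDeriv_zero]
    rw [e1]; exact hb 2 (by norm_num) p
  -- Lipschitz bounds
  have lip_u : ∀ a b : E × ℝ, ‖u a - u b‖ ≤ M * ‖a - b‖ := fun a b =>
    convex_univ.norm_image_sub_le_of_norm_fderiv_le (fun y _ => hu1 y)
      (fun y _ => hfd_le y) trivial trivial
  have lip_Du : ∀ a b : E × ℝ, ‖fderiv ℝ u a - fderiv ℝ u b‖ ≤ M * ‖a - b‖ := fun a b =>
    convex_univ.norm_image_sub_le_of_norm_fderiv_le (fun y _ => hu2 y)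
      (fun y _ => hfd2_le y) trivial trivial
  -- Taylor estimate
  have taylor : ∀ p q : E × ℝ,
      ‖u q - u p - fderiv ℝ u p (q - p)‖ ≤ M * ‖q - p‖ * ‖q - p‖ := by
    intro p q
    set A := fderiv ℝ u p with hA
    have hg : ∀ y : E × ℝ, HasFDerivAt (fun z => u z - A z) (fderiv ℝ u y - A) y :=
      fun y => (hu1 y).hasFDerivAt.sub (A.hasFDerivAt)
    have hq : q ∈ Metric.closedBall p ‖q - p‖ := by
      simp [Metric.mem_closedBall, dist_eq_norm]
      exact (dist_eq_norm q p).le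
    have hp : p ∈ Metric.closedBall p ‖q - p‖ := by
      simp [Metric.mem_closedBall, norm_nonneg]
      exact norm_nonneg (q - p)
    have := (convex_closedBall p ‖q - p‖).norm_image_sub_le_of_norm_fderiv_le
      (f := fun z => u z - A z)
      (fun y _ => (hg y).differentiableAt)
      (fun y hy => by
        rw [(hg y).fderiv]
        calc ‖fderiv ℝ u y - A‖ ≤ M * ‖y - p‖ := lip_Du y p
          _ ≤ M * ‖q - p‖ := by
            have : ‖y - p‖ ≤ ‖q - p‖ := by
              have := Metric.mem_closedBall.mp hy
              rwa [dist_eq_norm] at this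
            exact mul_le_mul_of_nonneg_left this hM0)
      hp hq
    calc ‖u q - u p - A (q - p)‖ = ‖(u q - A q) - (u p - A p)‖ := by
          rw [map_sub]; abel_nf
      _ ≤ (M * ‖q - p‖) * ‖q - p‖ := this
      _ = M * ‖q - p‖ * ‖q - p‖ := by ring
  -- set up points
  set w : E := u (x, t - Δt) with hw
  set p : E × ℝ := (x, t) with hp
  set q : E × ℝ := (x - Δt • w, t - Δt) with hq
  set A := fderiv ℝ u p with hA
  set v : E := u p with hv
  -- identify the derivatives in the statement
  have hderiv : deriv (fun s : ℝ => u (x, s)) t = A ((0 : E), (1 : ℝ)) := by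
    have h1 : HasDerivAt (fun s : ℝ => ((x : E), s)) ((0 : E), (1 : ℝ)) t :=
      (hasDerivAt_const t x).prodMk (hasDerivAt_id t)
    exact ((hu1 p).hasFDerivAt.comp_hasDerivAt t h1).deriv
  have hfx : fderiv ℝ (fun y : E => u (y, t)) x =
      A.comp (ContinuousLinearMap.inl ℝ E ℝ) :=
    ((hu1 p).hasFDerivAt.comp x (hasFDerivAt_prodMk_left x t)).fderiv
  have hsum : deriv (fun s : ℝ => u (x, s)) t
      + (fderiv ℝ (fun y : E => u (y, t)) x) v = A (v, 1) := by
    rw [hderiv, hfx]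
    have : ((0 : E), (1 : ℝ)) + ((v : E), (0 : ℝ)) = (v, 1) := by
      simp [Prod.mk_add_mk]
    rw [ContinuousLinearMap.comp_apply, ContinuousLinearMap.inl_apply, ← map_add, this]
  -- geometry
  have hqp : q - p = (-Δt) • ((w, 1) : E × ℝ) := by
    simp [hq, hp, Prod.mk_sub_mk, Prod.smul_mk, neg_smul]
  have hqp_norm : ‖q - p‖ ≤ Δt * (M + 1) := by
    rw [hqp, norm_smul]
    simp only [norm_neg, Real.norm_eq_abs, abs_of_pos hΔt]
    have h1 : ‖((w, 1) : E × ℝ)‖ ≤ M + 1 := by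
      rw [Prod.norm_def]
      refine max_le ?_ ?_
      · have hwM : ‖w‖ ≤ M := by
          have := hb 0 (by norm_num) (x, t - Δt)
          rwa [norm_iteratedFDeriv_zero] at this
        linarith
      · simp; linarith
    exact mul_le_mul_of_nonneg_left h1 (le_of_lt hΔt)
  have hwv : ‖w - v‖ ≤ M * Δt := by
    have : ((x, t - Δt) : E × ℝ) - (x, t) = (0, -Δt) := by
      simp [Prod.mk_sub_mk]
    calc ‖w - v‖ = ‖u (x, t - Δt) - u p‖ := rfl
      _ ≤ M * ‖((x, t - Δt) : E × ℝ) - (x, t)‖ := lip_u _ _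
      _ = M * Δt := by
          rw [this, Prod.norm_def]
          simp [abs_of_pos hΔt]
          exact Or.inl hΔt.le
  -- key algebraic identity
  have hR := taylor p q
  set R := u q - u p - A (q - p) with hRdef
  have hAqp : A (q - p) = (-Δt) • A (w, 1) := by rw [hqp, map_smul]
  have hwv1 : ((w, 1) : E × ℝ) - (v, 1) = (w - v, 0) := by
    simp [Prod.mk_sub_mk]
  have key : Δt⁻¹ • (u p - u q) - A (v, 1)
      = Δt⁻¹ • (-R + Δt • A ((w - v, 0) : E × ℝ)) := by
    have hAd : A ((w - v, 0) : E × ℝ) = A (w, 1) - A (v, 1) := by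
      rw [← map_sub, hwv1]
    rw [hAd, hRdef, hAqp]
    have hΔ : Δt ≠ 0 := ne_of_gt hΔt
    match_scalars <;> field_simp <;> ring
  rw [show Δt⁻¹ • (u (x, t) - u (x - Δt • u (x, t - Δt), t - Δt))
      - (deriv (fun s : ℝ => u (x, s)) t
        + (fderiv ℝ (fun y : E => u (y, t)) x) (u (x, t)))
      = Δt⁻¹ • (u p - u q) - A (v, 1) by rw [hsum]]
  rw [key]
  have hnorm : ‖Δt⁻¹ • (-R + Δt • A ((w - v, 0) : E × ℝ))‖
      ≤ Δt⁻¹ * (‖R‖ + Δt * ‖A ((w - v, 0) : E × ℝ)‖) := by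
    rw [norm_smul, Real.norm_eq_abs, abs_of_pos (inv_pos.mpr hΔt)]
    refine mul_le_mul_of_nonneg_left ?_ (le_of_lt (inv_pos.mpr hΔt))
    calc ‖-R + Δt • A ((w - v, 0) : E × ℝ)‖ ≤ ‖-R‖ + ‖Δt • A ((w - v, 0) : E × ℝ)‖ :=
          norm_add_le _ _
      _ = ‖R‖ + Δt * ‖A ((w - v, 0) : E × ℝ)‖ := by
          rw [norm_neg, norm_smul, Real.norm_eq_abs, abs_of_pos hΔt]
  refine hnorm.trans ?_
  have hAwv : ‖A ((w - v, 0) : E × ℝ)‖ ≤ M * (M * Δt) := by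
    calc ‖A ((w - v, 0) : E × ℝ)‖ ≤ ‖A‖ * ‖((w - v, 0) : E × ℝ)‖ := A.le_opNorm _
      _ ≤ M * ‖w - v‖ := by
          rw [Prod.norm_def]
          simp only [norm_zero]
          rw [max_eq_left (norm_nonneg _)]
          exact mul_le_mul_of_nonneg_right (hfd_le p) (norm_nonneg _)
      _ ≤ M * (M * Δt) := mul_le_mul_of_nonneg_left hwv hM0
  have hRn : ‖R‖ ≤ M * (Δt * (M + 1)) * (Δt * (M + 1)) := by
    refine hR.trans ?_
    have h0 : (0:ℝ) ≤ ‖q - p‖ := norm_nonneg _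
    have h1 : (0:ℝ) ≤ Δt * (M + 1) := by positivity
    calc M * ‖q - p‖ * ‖q - p‖ = M * (‖q - p‖ * ‖q - p‖) := by ring
      _ ≤ M * ((Δt * (M + 1)) * (Δt * (M + 1))) :=
          mul_le_mul_of_nonneg_left (mul_le_mul hqp_norm hqp_norm h0 h1) hM0
      _ = M * (Δt * (M + 1)) * (Δt * (M + 1)) := by ring
  calc Δt⁻¹ * (‖R‖ + Δt * ‖A ((w - v, 0) : E × ℝ)‖)
      ≤ Δt⁻¹ * (M * (Δt * (M + 1)) * (Δt * (M + 1)) + Δt * (M * (M * Δt))) := by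
        refine mul_le_mul_of_nonneg_left ?_ (le_of_lt (inv_pos.mpr hΔt))
        refine add_le_add hRn (mul_le_mul_of_nonneg_left hAwv (le_of_lt hΔt))
    _ = (M * (M + 1) ^ 2 + M * M) * Δt := by
        field_simp
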